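/- Let v1 = v2 > 0 with v2/2 a positive integer, and set m = v2/2 − 1. A strategy profile (X, Y) is a Nash equilibrium of the two-player all-pay auction with valuations (v1, v2) if and only if X = α·U_O^{m+1} + (1−α)·U_E^m and Y = β·U_O^{m+1} + (1−β)·U_E^m for some α, β ∈ [0, 1]. In this case the equilibrium payoffs are P_{v1}(X, Y) = 1 − β and P_{v2}(Y, X) = 1 − α. -/

import Mathlib

open scoped BigOperators

/-- A (mixed) strategy: a probability distribution on the nonnegative
integers with finite expectation. -/
structure Strategy where
  p : ℕ → ℝ
  nonneg : ∀ n, 0 ≤ p n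
  total : HasSum p 1
  finExp : Summable fun n : ℕ => (n : ℝ) * p n

namespace Strategy

/-- Expectation of a strategy. -/
noncomputable def exp (ξ : Strategy) : ℝ := ∑' n : ℕ, (n : ℝ) * ξ.p n

end Strategy

/-- Probability that an observation from `ξ` strictly exceeds an independent
observation from `η`. -/
noncomputable def prGT (ξ η : Strategy) : ℝ :=
  ∑' n, ξ.p n * ∑ k ∈ Finset.range n, η.p k

/-- Probability that independent observations from `ξ` and `η` are equal. -/
noncomputable def prEq (ξ η : Strategy) : ℝ := ∑' n, ξ.p n * η.p n

/-- Expected all-pay auction payoff of a player with valuation `v` playing `ξ`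
against `η`:  `v·Pr(X > Y) + (v/2)·Pr(X = Y) − E(X)`. -/
noncomputable def payoff (v : ℝ) (ξ η : Strategy) : ℝ :=
  v * prGT ξ η + v / 2 * prEq ξ η - ξ.exp

/-- Nash equilibrium of the two-player all-pay auction with valuations `(v1, v2)`. -/
def IsNashAPA (v1 v2 : ℝ) (X Y : Strategy) : Prop :=
  (∀ X' : Strategy, payoff v1 X' Y ≤ payoff v1 X Y) ∧
  (∀ Y' : Strategy, payoff v2 Y' X ≤ payoff v2 Y X)

/-- `H(ξ, η) = Pr(X > Y) − Pr(X < Y)`. -/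
noncomputable def Hval (ξ η : Strategy) : ℝ := prGT ξ η - prGT η ξ

/-- Nash equilibrium of the discrete General Lotto game `Γ(b1, b2)`. -/
def IsNashLotto (b1 b2 : ℝ) (X Y : Strategy) : Prop :=
  X.exp = b1 ∧ Y.exp = b2 ∧
  (∀ X' : Strategy, X'.exp = b1 → Hval X' Y ≤ Hval X Y) ∧
  (∀ Y' : Strategy, Y'.exp = b2 → Hval Y' X ≤ Hval Y X)

/-- `U_O^m`: uniform distribution on the odd numbers `{1, 3, …, 2m−1}` (as a pmf). -/
noncomputable def UO (m : ℕ) : ℕ → ℝ := fun n =>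
  if Odd n ∧ n < 2 * m then (m : ℝ)⁻¹ else 0

/-- `U_E^m`: uniform distribution on the even numbers `{0, 2, …, 2m}` (as a pmf). -/
noncomputable def UE (m : ℕ) : ℕ → ℝ := fun n =>
  if Even n ∧ n ≤ 2 * m then ((m : ℝ) + 1)⁻¹ else 0

/-- `U_{O↑1}^m`: uniform distribution on the even numbers `{2, 4, …, 2m−2}` (as a pmf). -/
noncomputable def UOup (m : ℕ) : ℕ → ℝ := fun n =>
  if Even n ∧ 0 < n ∧ n ≤ 2 * m - 2 then ((m : ℝ) - 1)⁻¹ else 0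

/-- `δ_j`: the point mass at `j` (as a pmf). -/
noncomputable def deltaFn (j : ℕ) : ℕ → ℝ := fun n => if n = j then 1 else 0

/-- `W_j^m = (1/(2m))·δ_0 + Σ_{i=1}^{j−1}(1/m)·δ_{2i} + (1/(2m))·δ_{2j}
      + Σ_{i=j+1}^{m}(1/m)·δ_{2i−1}` (as a pmf). -/
noncomputable def Wfn (j m : ℕ) : ℕ → ℝ := fun n =>
  if n = 0 ∨ n = 2 * j then (2 * (m : ℝ))⁻¹
  else if Even n ∧ n < 2 * j then (m : ℝ)⁻¹
  else if Odd n ∧ 2 * j < n ∧ n < 2 * m then (m : ℝ)⁻¹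
  else 0

/-- `V_j^m = Σ_{i=1}^{j−1}(2/(2m+1))·δ_{2i−1} + (1/(2m+1))·δ_{2j−1}
      + Σ_{i=j}^{m}(2/(2m+1))·δ_{2i}` (as a pmf). -/
noncomputable def Vfn (j m : ℕ) : ℕ → ℝ := fun n =>
  if n = 2 * j - 1 then (2 * (m : ℝ) + 1)⁻¹
  else if Odd n ∧ n < 2 * j - 1 then 2 * (2 * (m : ℝ) + 1)⁻¹
  else if Even n ∧ 2 * j ≤ n ∧ n ≤ 2 * m then 2 * (2 * (m : ℝ) + 1)⁻¹
  else 0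

set_option maxHeartbeats 1000000

namespace APA

noncomputable def F (η : Strategy) (j : ℕ) : ℝ := ∑ k ∈ Finset.range j, η.p k

lemma summable_p (ξ : Strategy) : Summable ξ.p := ξ.total.summable

lemma tsum_p (ξ : Strategy) : ∑' n, ξ.p n = 1 := ξ.total.tsum_eq

lemma F_nonneg (η : Strategy) (j : ℕ) : 0 ≤ F η j :=
  Finset.sum_nonneg fun k _ => η.nonneg k

lemma F_le_one (η : Strategy) (j : ℕ) : F η j ≤ 1 := by
  rw [← tsum_p η]
  exact Summable.sum_le_tsum _ (fun k _ => η.nonneg k) (summable_p η)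

lemma F_succ (η : Strategy) (j : ℕ) : F η (j+1) = F η j + η.p j :=
  Finset.sum_range_succ _ _

lemma p_le_one (η : Strategy) (n : ℕ) : η.p n ≤ 1 := by
  rw [← tsum_p η]
  exact Summable.le_tsum (summable_p η) n (fun k _ => η.nonneg k)

noncomputable def fv (v : ℝ) (η : Strategy) (j : ℕ) : ℝ :=
  v * F η j + v / 2 * η.p j - j

lemma summable_mul_F (ξ η : Strategy) : Summable fun j => ξ.p j * F η j := by
  apply Summable.of_nonneg_of_le (fun j => mul_nonneg (ξ.nonneg j) (F_nonneg η j))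
    (fun j => ?_) (summable_p ξ)
  calc ξ.p j * F η j ≤ ξ.p j * 1 :=
        mul_le_mul_of_nonneg_left (F_le_one η j) (ξ.nonneg j)
    _ = ξ.p j := mul_one _

lemma summable_mul_p (ξ η : Strategy) : Summable fun j => ξ.p j * η.p j := by
  apply Summable.of_nonneg_of_le (fun j => mul_nonneg (ξ.nonneg j) (η.nonneg j))
    (fun j => ?_) (summable_p ξ)
  calc ξ.p j * η.p j ≤ ξ.p j * 1 :=
        mul_le_mul_of_nonneg_left (p_le_one η j) (ξ.nonneg j)
    _ = ξ.p j := mul_one _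

lemma summable_exp (ξ : Strategy) : Summable fun j : ℕ => (j : ℝ) * ξ.p j := ξ.finExp

lemma summable_mul_fv (v : ℝ) (ξ η : Strategy) :
    Summable fun j => ξ.p j * fv v η j := by
  have h : (fun j => ξ.p j * fv v η j) =
      fun j => v * (ξ.p j * F η j) + v/2 * (ξ.p j * η.p j) - (j : ℝ) * ξ.p j := by
    funext j; simp [fv]; ring
  rw [h]
  exact (((summable_mul_F ξ η).mul_left v).add
    ((summable_mul_p ξ η).mul_left (v/2))).sub (summable_exp ξ)

lemma payoff_eq (v : ℝ) (ξ η : Strategy) :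
    payoff v ξ η = ∑' j, ξ.p j * fv v η j := by
  have h : (fun j => ξ.p j * fv v η j) =
      fun j => v * (ξ.p j * F η j) + v/2 * (ξ.p j * η.p j) - (j : ℝ) * ξ.p j := by
    funext j; simp [fv]; ring
  rw [h, Summable.tsum_sub (((summable_mul_F ξ η).mul_left v).add
      ((summable_mul_p ξ η).mul_left (v/2))) (summable_exp ξ),
    Summable.tsum_add ((summable_mul_F ξ η).mul_left v) ((summable_mul_p ξ η).mul_left (v/2)),
    tsum_mul_left, tsum_mul_left]
  rfl

-- delta strategy
noncomputable def deltaS (j : ℕ) : Strategy where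
  p := fun n => if n = j then 1 else 0
  nonneg := fun n => by positivity
  total := hasSum_ite_eq j 1
  finExp := by
    apply summable_of_ne_finset_zero (s := {j})
    intro n hn
    simp only [Finset.mem_singleton] at hn
    simp [hn]

lemma payoff_deltaS (v : ℝ) (j : ℕ) (η : Strategy) :
    payoff v (deltaS j) η = fv v η j := by
  rw [payoff_eq]
  rw [tsum_eq_single j]
  · simp [deltaS]
  · intro n hn; simp [deltaS, hn]


lemma summable_prodmul (ξ η : Strategy) :
    Summable (fun q : ℕ × ℕ => ξ.p q.1 * η.p q.2) :=
  Summable.mul_of_nonneg (summable_p ξ) (summable_p η) ξ.nonneg η.nonneg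

lemma total_prob (ξ η : Strategy) : prGT ξ η + prGT η ξ + prEq ξ η = 1 := by
  classical
  have hfs : Summable (fun q : ℕ × ℕ => ξ.p q.1 * η.p q.2) := summable_prodmul ξ η
  have hnn : ∀ q : ℕ × ℕ, 0 ≤ ξ.p q.1 * η.p q.2 :=
    fun q => mul_nonneg (ξ.nonneg q.1) (η.nonneg q.2)
  have hs1 : Summable (fun q : ℕ × ℕ => if q.2 < q.1 then ξ.p q.1 * η.p q.2 else 0) :=
    Summable.of_nonneg_of_le
      (fun q => by by_cases h : q.2 < q.1 <;> simp [h, hnn q])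
      (fun q => by by_cases h : q.2 < q.1 <;> simp [h, hnn q]) hfs
  have hs2 : Summable (fun q : ℕ × ℕ => if q.1 < q.2 then ξ.p q.1 * η.p q.2 else 0) :=
    Summable.of_nonneg_of_le
      (fun q => by by_cases h : q.1 < q.2 <;> simp [h, hnn q])
      (fun q => by by_cases h : q.1 < q.2 <;> simp [h, hnn q]) hfs
  have hs3 : Summable (fun q : ℕ × ℕ => if q.1 = q.2 then ξ.p q.1 * η.p q.2 else 0) :=
    Summable.of_nonneg_of_le
      (fun q => by by_cases h : q.1 = q.2 <;> simp [h] <;>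
        exact mul_nonneg (ξ.nonneg _) (η.nonneg _))
      (fun q => by by_cases h : q.1 = q.2 <;> simp [h, hnn q, le_refl]) hfs
  have htot : ∑' q : ℕ × ℕ, ξ.p q.1 * η.p q.2 = 1 := by
    rw [Summable.tsum_prod' hfs
      (fun b => show Summable fun c => ξ.p b * η.p c from (summable_p η).mul_left _)]
    calc ∑' (a) (b), ξ.p a * η.p b = ∑' a : ℕ, ξ.p a * ∑' b, η.p b :=
          tsum_congr fun a => tsum_mul_left
      _ = 1 := by rw [tsum_p η]; simpa using tsum_p ξ
  have h1 : ∑' q : ℕ × ℕ, (if q.2 < q.1 then ξ.p q.1 * η.p q.2 else 0) = prGT ξ η := by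
    rw [Summable.tsum_prod' hs1 (fun b => show Summable fun c => if c < b then ξ.p b * η.p c else 0 by
      apply summable_of_ne_finset_zero (s := Finset.range b)
      intro n hn
      simp only [Finset.mem_range, not_lt] at hn
      simp [Nat.not_lt.mpr hn])]
    unfold prGT
    apply tsum_congr; intro a
    rw [show (fun c => if c < a then ξ.p a * η.p c else 0) =
        (fun c => if c ∈ Finset.range a then ξ.p a * η.p c else 0) by
      funext c; simp [Finset.mem_range]]
    rw [tsum_eq_sum (s := Finset.range a) (fun c hc => by simp [hc]),
      Finset.sum_ite_mem, Finset.inter_self, Finset.mul_sum]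
  have h2 : ∑' q : ℕ × ℕ, (if q.1 < q.2 then ξ.p q.1 * η.p q.2 else 0) = prGT η ξ := by
    rw [← (Equiv.prodComm ℕ ℕ).tsum_eq]
    have hs2' : Summable (fun q : ℕ × ℕ => if q.2 < q.1 then η.p q.1 * ξ.p q.2 else 0) := by
      have h := hs2.comp_injective (Equiv.prodComm ℕ ℕ).injective
      apply h.congr
      intro q
      simp [Equiv.prodComm, mul_comm]
    calc ∑' q : ℕ × ℕ, (if (Equiv.prodComm ℕ ℕ q).1 < (Equiv.prodComm ℕ ℕ q).2 then
            ξ.p (Equiv.prodComm ℕ ℕ q).1 * η.p (Equiv.prodComm ℕ ℕ q).2 else 0)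
        = ∑' q : ℕ × ℕ, (if q.2 < q.1 then η.p q.1 * ξ.p q.2 else 0) := by
          apply tsum_congr; intro q; simp [Equiv.prodComm, mul_comm]; rfl
      _ = prGT η ξ := by
          rw [Summable.tsum_prod' hs2' (fun b => show Summable fun c => if c < b then η.p b * ξ.p c else 0 by
            apply summable_of_ne_finset_zero (s := Finset.range b)
            intro n hn
            simp only [Finset.mem_range, not_lt] at hn
            simp [Nat.not_lt.mpr hn])]
          unfold prGT
          apply tsum_congr; intro a
          rw [show (fun c => if c < a then η.p a * ξ.p c else 0) =
              (fun c => if c ∈ Finset.range a then η.p a * ξ.p c else 0) by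
            funext c; simp [Finset.mem_range]]
          rw [tsum_eq_sum (s := Finset.range a) (fun c hc => by simp [hc]),
            Finset.sum_ite_mem, Finset.inter_self, Finset.mul_sum]
  have h3 : ∑' q : ℕ × ℕ, (if q.1 = q.2 then ξ.p q.1 * η.p q.2 else 0) = prEq ξ η := by
    rw [Summable.tsum_prod' hs3 (fun b => show Summable fun c => if b = c then ξ.p b * η.p c else 0 by
      apply summable_of_ne_finset_zero (s := {b})
      intro n hn
      simp only [Finset.mem_singleton] at hn
      simp [Ne.symm hn])]
    unfold prEq
    apply tsum_congr; intro a
    rw [tsum_eq_single a (fun n hn => by simp [Ne.symm hn])]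
    simp
  rw [← h1, ← h2, ← h3, ← Summable.tsum_add hs1 hs2, ← Summable.tsum_add (hs1.add hs2) hs3, ← htot]
  apply tsum_congr; intro q
  rcases lt_trichotomy q.1 q.2 with h | h | h
  · simp [h, not_lt_of_gt h, Nat.ne_of_lt h]
  · simp [h, lt_irrefl]
  · simp [h, not_lt_of_gt h, (Nat.ne_of_lt h).symm]

lemma prEq_comm (ξ η : Strategy) : prEq ξ η = prEq η ξ :=
  tsum_congr fun n => mul_comm _ _

lemma payoff_add_payoff (v : ℝ) (ξ η : Strategy) :
    payoff v ξ η + payoff v η ξ = v - ξ.exp - η.exp := by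
  unfold payoff
  have h := total_prob ξ η
  rw [prEq_comm η ξ]
  linear_combination v * h

-- parity reindexing
lemma sum_even_split (g : ℕ → ℝ) (M : ℕ) :
    ∑ j ∈ Finset.range (2*M), (if Even j then g j else 0) = ∑ k ∈ Finset.range M, g (2*k) := by
  induction M with
  | zero => simp
  | succ M ih =>
    have h2 : 2*(M+1) = (2*M) + 1 + 1 := by ring
    rw [h2, Finset.sum_range_succ, Finset.sum_range_succ, ih, Finset.sum_range_succ]
    have ho : ¬ Even (2*M+1) := by simp [Nat.even_add_one, parity_simps]
    simp [ho]

lemma sum_odd_split (g : ℕ → ℝ) (M : ℕ) :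
    ∑ j ∈ Finset.range (2*M), (if Odd j then g j else 0) = ∑ k ∈ Finset.range M, g (2*k+1) := by
  induction M with
  | zero => simp
  | succ M ih =>
    have h2 : 2*(M+1) = (2*M) + 1 + 1 := by ring
    rw [h2, Finset.sum_range_succ, Finset.sum_range_succ, ih, Finset.sum_range_succ]
    have ho : ¬ Odd (2*M) := by simp [parity_simps]
    have he : Odd (2*M+1) := by simp [parity_simps]
    simp [ho, he]

lemma UO_sum (N : ℕ) (hN : 0 < N) : ∑ j ∈ Finset.range (2*N), UO N j = 1 := by
  have h : ∀ j ∈ Finset.range (2*N), UO N j = (if Odd j then (N:ℝ)⁻¹ else 0) := by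
    intro j hj
    simp only [Finset.mem_range] at hj
    unfold UO
    by_cases ho : Odd j <;> simp [ho, hj]
  rw [Finset.sum_congr rfl h, sum_odd_split]
  simp [Finset.sum_const]
  field_simp

lemma UE_sum (m : ℕ) : ∑ j ∈ Finset.range (2*(m+1)), UE m j = 1 := by
  have h : ∀ j ∈ Finset.range (2*(m+1)), UE m j = (if Even j then ((m:ℝ)+1)⁻¹ else 0) := by
    intro j hj
    simp only [Finset.mem_range] at hj
    unfold UE
    by_cases ho : Even j
    · have : j ≤ 2*m := by
        rcases ho with ⟨r, rfl⟩; omega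
      simp [ho, this]
    · simp [ho]
  rw [Finset.sum_congr rfl h, sum_even_split]
  simp [Finset.sum_const]
  have : ((m:ℝ)+1) ≠ 0 := by positivity
  field_simp

lemma UO_nonneg (N j : ℕ) : 0 ≤ UO N j := by
  unfold UO; split <;> positivity

lemma UE_nonneg (m j : ℕ) : 0 ≤ UE m j := by
  unfold UE; split <;> positivity

lemma UO_eq_zero {N j : ℕ} (h : 2*N ≤ j) : UO N j = 0 :=
  if_neg (fun hh => absurd hh.2 (by omega))

lemma UE_eq_zero {m j : ℕ} (h : 2*m+1 ≤ j) : UE m j = 0 :=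
  if_neg (fun hh => absurd hh.2 (by omega))

noncomputable def UOS (N : ℕ) (hN : 0 < N) : Strategy where
  p := UO N
  nonneg := UO_nonneg N
  total := by
    have := hasSum_sum_of_ne_finset_zero (s := Finset.range (2*N)) (f := UO N) (L := SummationFilter.unconditional ℕ)
      (fun j hj => by
        simp only [Finset.mem_range, not_lt] at hj
        exact UO_eq_zero hj)
    rwa [UO_sum N hN] at this
  finExp := by
    apply summable_of_ne_finset_zero (s := Finset.range (2*N))
    intro j hj
    simp only [Finset.mem_range, not_lt] at hj
    rw [UO_eq_zero hj, mul_zero]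

noncomputable def UES (m : ℕ) : Strategy where
  p := UE m
  nonneg := UE_nonneg m
  total := by
    have := hasSum_sum_of_ne_finset_zero (s := Finset.range (2*(m+1))) (f := UE m) (L := SummationFilter.unconditional ℕ)
      (fun j hj => by
        simp only [Finset.mem_range, not_lt] at hj
        exact UE_eq_zero (by omega))
    rwa [UE_sum m] at this
  finExp := by
    apply summable_of_ne_finset_zero (s := Finset.range (2*(m+1)))
    intro j hj
    simp only [Finset.mem_range, not_lt] at hj
    rw [UE_eq_zero (by omega), mul_zero]

lemma UOS_p (N : ℕ) (hN : 0 < N) : (UOS N hN).p = UO N := rfl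
lemma UES_p (m : ℕ) : (UES m).p = UE m := rfl

lemma sum_even_id (M : ℕ) :
    ∑ j ∈ Finset.range (2*M), (if Even j then (j:ℝ) else 0) = (M:ℝ)*((M:ℝ)-1) := by
  rw [sum_even_split (fun j => (j:ℝ)) M]
  induction M with
  | zero => simp
  | succ M ih => rw [Finset.sum_range_succ, ih]; push_cast; ring

lemma sum_odd_id (M : ℕ) :
    ∑ j ∈ Finset.range (2*M), (if Odd j then (j:ℝ) else 0) = (M:ℝ)*(M:ℝ) := by
  rw [sum_odd_split (fun j => (j:ℝ)) M]
  induction M with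
  | zero => simp
  | succ M ih => rw [Finset.sum_range_succ, ih]; push_cast; ring

lemma even_weight (η : Strategy) (M : ℕ) :
    ∑ j ∈ Finset.range (2*M), (if Even j then (2 * F η j + η.p j) else 0)
      = ∑ j ∈ Finset.range (2*M), ((2*M-1-j : ℕ):ℝ) * η.p j := by
  induction M with
  | zero => simp
  | succ M ih =>
    have h2 : 2*(M+1) = (2*M) + 1 + 1 := by ring
    rw [h2, Finset.sum_range_succ, Finset.sum_range_succ, Finset.sum_range_succ,
      Finset.sum_range_succ]
    have hwt : ∀ j ∈ Finset.range (2*M), ((2*M+1+1-1-j : ℕ):ℝ) * η.p j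
        = ((2*M-1-j : ℕ):ℝ) * η.p j + 2 * η.p j := by
      intro j hj
      simp only [Finset.mem_range] at hj
      have hn : (2*M+1+1-1-j : ℕ) = (2*M-1-j : ℕ) + 2 := by omega
      rw [hn]; push_cast; ring
    rw [Finset.sum_congr rfl hwt, Finset.sum_add_distrib, ih]
    have he : Even (2*M) := ⟨M, by ring⟩
    have ho : ¬ Even (2*M+1) := by simp [Nat.even_add_one, he]
    have hF : F η (2*M) = ∑ j ∈ Finset.range (2*M), η.p j := rfl
    have hn1 : (2*M+1+1-1-(2*M) : ℕ) = 1 := by omega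
    have hn2 : (2*M+1+1-1-(2*M+1) : ℕ) = 0 := by omega
    simp only [he, ho, if_true, if_false, hn1, hn2, ite_true, ite_false]
    rw [← Finset.mul_sum, ← hF]
    push_cast
    ring

lemma odd_weight (η : Strategy) (M : ℕ) :
    ∑ j ∈ Finset.range (2*M), (if Odd j then (2 * F η j + η.p j) else 0)
      = ∑ j ∈ Finset.range (2*M), ((2*M-j : ℕ):ℝ) * η.p j := by
  induction M with
  | zero => simp
  | succ M ih =>
    have h2 : 2*(M+1) = (2*M) + 1 + 1 := by ring
    rw [h2, Finset.sum_range_succ, Finset.sum_range_succ, Finset.sum_range_succ,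
      Finset.sum_range_succ]
    have hwt : ∀ j ∈ Finset.range (2*M), ((2*M+1+1-j : ℕ):ℝ) * η.p j
        = ((2*M-j : ℕ):ℝ) * η.p j + 2 * η.p j := by
      intro j hj
      simp only [Finset.mem_range] at hj
      have hn : (2*M+1+1-j : ℕ) = (2*M-j : ℕ) + 2 := by omega
      rw [hn]; push_cast; ring
    rw [Finset.sum_congr rfl hwt, Finset.sum_add_distrib, ih]
    have he : ¬ Odd (2*M) := by simp [parity_simps]
    have ho : Odd (2*M+1) := ⟨M, by ring⟩
    have hF : F η (2*M+1) = ∑ j ∈ Finset.range (2*M), η.p j + η.p (2*M) :=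
      Finset.sum_range_succ _ _
    have hn1 : (2*M+1+1-(2*M) : ℕ) = 2 := by omega
    have hn2 : (2*M+1+1-(2*M+1) : ℕ) = 1 := by omega
    simp only [he, ho, if_true, if_false, hn1, hn2, ite_true, ite_false]
    rw [hF, ← Finset.mul_sum]
    push_cast
    ring

lemma summable_trunc (η : Strategy) (c : ℕ) :
    Summable fun j => ((c - j : ℕ):ℝ) * η.p j := by
  apply Summable.of_nonneg_of_le
    (fun j => mul_nonneg (by positivity) (η.nonneg j))
    (fun j => ?_) ((summable_p η).mul_left (c:ℝ))
  exact mul_le_mul_of_nonneg_right (by exact_mod_cast Nat.cast_le.mpr (Nat.sub_le c j))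
    (η.nonneg j)

noncomputable def Dc (c : ℕ) (j : ℕ) : ℝ := ((c - j : ℕ):ℝ) - (c:ℝ) + (j:ℝ)

lemma Dc_nonneg (c j : ℕ) : 0 ≤ Dc c j := by
  unfold Dc
  rcases le_or_gt j c with h | h
  · rw [Nat.cast_sub h]; ring_nf; positivity
  · rw [Nat.sub_eq_zero_of_le h.le]
    push_cast
    have : (c:ℝ) ≤ j := by exact_mod_cast h.le
    linarith

lemma Dc_eq_zero {c j : ℕ} (h : j ≤ c) : Dc c j = 0 := by
  unfold Dc; rw [Nat.cast_sub h]; ring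

lemma Dc_pos {c j : ℕ} (h : c < j) : 1 ≤ Dc c j := by
  unfold Dc
  rw [Nat.sub_eq_zero_of_le h.le]
  push_cast
  have : (c:ℝ) + 1 ≤ j := by exact_mod_cast h
  linarith

lemma Dc_le (c j : ℕ) : Dc c j ≤ j := by
  unfold Dc
  have : ((c - j : ℕ):ℝ) ≤ c := by exact_mod_cast Nat.sub_le c j
  linarith

lemma summable_Dc (η : Strategy) (c : ℕ) : Summable fun j => η.p j * Dc c j := by
  apply Summable.of_nonneg_of_le
    (fun j => mul_nonneg (η.nonneg j) (Dc_nonneg c j))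
    (fun j => ?_) (summable_exp η)
  calc η.p j * Dc c j ≤ η.p j * j :=
        mul_le_mul_of_nonneg_left (Dc_le c j) (η.nonneg j)
    _ = (j:ℝ) * η.p j := mul_comm _ _

lemma trunc_decomp (η : Strategy) (c : ℕ) :
    ∑' j, ((c - j : ℕ):ℝ) * η.p j = (c:ℝ) - η.exp + ∑' j, η.p j * Dc c j := by
  have hpt : ∀ j, ((c - j : ℕ):ℝ) * η.p j
      = (c:ℝ) * η.p j - (j:ℝ) * η.p j + η.p j * Dc c j := by
    intro j; unfold Dc; ring
  rw [tsum_congr hpt,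
    Summable.tsum_add (((summable_p η).mul_left _).sub (summable_exp η)) (summable_Dc η c),
    Summable.tsum_sub ((summable_p η).mul_left _) (summable_exp η), tsum_mul_left, tsum_p η]
  unfold Strategy.exp
  ring

lemma payoff_UES_fin (m : ℕ) (η : Strategy) (v : ℝ) :
    payoff v (UES m) η = ∑ j ∈ Finset.range (2*(m+1)), UE m j * fv v η j := by
  rw [payoff_eq, UES_p]
  exact tsum_eq_sum (fun j hj => by
    simp only [Finset.mem_range, not_lt] at hj
    rw [UE_eq_zero (by omega), zero_mul])

lemma payoff_UES_val (m : ℕ) (η : Strategy) :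
    payoff (2*((m:ℝ)+1)) (UES m) η
      = ∑' j, ((2*m+1 - j : ℕ):ℝ) * η.p j - (m:ℝ) := by
  have hNne : ((m:ℝ)+1) ≠ 0 := by positivity
  rw [payoff_UES_fin]
  have h1 : ∀ j ∈ Finset.range (2*(m+1)), UE m j * fv (2*((m:ℝ)+1)) η j
      = (if Even j then (2 * F η j + η.p j) else 0)
        - ((m:ℝ)+1)⁻¹ * (if Even j then (j:ℝ) else 0) := by
    intro j hj
    simp only [Finset.mem_range] at hj
    unfold UE
    by_cases he : Even j
    · have hle : j ≤ 2*m := by rcases he with ⟨r, rfl⟩; omega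
      simp only [he, hle, and_self, if_true, ite_true]
      unfold fv
      field_simp
    · simp [he]
  rw [Finset.sum_congr rfl h1, Finset.sum_sub_distrib, ← Finset.mul_sum,
    even_weight η (m+1), sum_even_id (m+1)]
  have h2 : ∑' j, ((2*m+1 - j : ℕ):ℝ) * η.p j
      = ∑ j ∈ Finset.range (2*(m+1)), ((2*m+1-j : ℕ):ℝ) * η.p j := by
    apply tsum_eq_sum
    intro j hj
    simp only [Finset.mem_range, not_lt] at hj
    rw [Nat.sub_eq_zero_of_le (by omega), Nat.cast_zero, zero_mul]
  rw [h2]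
  have h3 : ∀ j ∈ Finset.range (2*(m+1)), ((2*(m+1)-1-j : ℕ):ℝ) * η.p j
      = ((2*m+1-j : ℕ):ℝ) * η.p j := by
    intro j _
    have he : (2*(m+1)-1-j) = (2*m+1-j) := by omega
    rw [he]
  rw [Finset.sum_congr rfl h3]
  push_cast
  field_simp
  ring

lemma payoff_UOS_fin (m : ℕ) (η : Strategy) (v : ℝ) :
    payoff v (UOS (m+1) (Nat.succ_pos m)) η
      = ∑ j ∈ Finset.range (2*(m+1)), UO (m+1) j * fv v η j := by
  rw [payoff_eq, UOS_p]
  exact tsum_eq_sum (fun j hj => by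
    simp only [Finset.mem_range, not_lt] at hj
    rw [UO_eq_zero hj, zero_mul])

lemma payoff_UOS_val (m : ℕ) (η : Strategy) :
    payoff (2*((m:ℝ)+1)) (UOS (m+1) (Nat.succ_pos m)) η
      = ∑' j, ((2*(m+1) - j : ℕ):ℝ) * η.p j - ((m:ℝ)+1) := by
  have hNne : ((m:ℝ)+1) ≠ 0 := by positivity
  rw [payoff_UOS_fin]
  have h1 : ∀ j ∈ Finset.range (2*(m+1)), UO (m+1) j * fv (2*((m:ℝ)+1)) η j
      = (if Odd j then (2 * F η j + η.p j) else 0)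
        - ((m:ℝ)+1)⁻¹ * (if Odd j then (j:ℝ) else 0) := by
    intro j hj
    simp only [Finset.mem_range] at hj
    unfold UO
    by_cases ho : Odd j
    · simp only [ho, hj, and_self, if_true, ite_true]
      unfold fv
      push_cast
      field_simp
    · simp [ho]
  rw [Finset.sum_congr rfl h1, Finset.sum_sub_distrib, ← Finset.mul_sum,
    odd_weight η (m+1), sum_odd_id (m+1)]
  have h2 : ∑' j, ((2*(m+1) - j : ℕ):ℝ) * η.p j
      = ∑ j ∈ Finset.range (2*(m+1)), ((2*(m+1)-j : ℕ):ℝ) * η.p j := by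
    apply tsum_eq_sum
    intro j hj
    simp only [Finset.mem_range, not_lt] at hj
    rw [Nat.sub_eq_zero_of_le (by omega), Nat.cast_zero, zero_mul]
  rw [h2]
  push_cast
  field_simp

section Mix
variable {m : ℕ} {β : ℝ} {Y : Strategy}
  (hβ0 : 0 ≤ β) (hβ1 : β ≤ 1)
  (hY : ∀ n, Y.p n = β * UO (m + 1) n + (1 - β) * UE m n)

include hY

lemma mix_p_zero : ∀ j, 2*(m+1) ≤ j → Y.p j = 0 := by
  intro j hj
  rw [hY j]
  unfold UO UE
  rw [if_neg (fun hh => absurd hh.2 (by omega)), if_neg (fun hh => absurd hh.2 (by omega))]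
  ring

lemma mix_F : ∀ j, F Y j
    = β * ((min (j/2) (m+1) : ℕ):ℝ) * ((m:ℝ)+1)⁻¹
      + (1-β) * ((min ((j+1)/2) (m+1) : ℕ):ℝ) * ((m:ℝ)+1)⁻¹ := by
  intro j
  induction j with
  | zero => simp [F]
  | succ j ih =>
    rw [F_succ, ih, hY j]
    unfold UO UE
    rcases Nat.even_or_odd j with hpar | hpar
    · have hp2 : j % 2 = 0 := Nat.even_iff.mp hpar
      have hno : ¬ Odd j := by simp [Nat.odd_iff, hp2]
      rw [if_neg (fun hh : Odd j ∧ j < 2*(m+1) => hno hh.1)]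
      rcases le_or_gt j (2*m) with hle | hgt
      · rw [if_pos ⟨hpar, hle⟩]
        have e2 : min ((j+1+1)/2) (m+1) = min ((j+1)/2) (m+1) + 1 := by omega
        have e1 : min ((j+1)/2) (m+1) = min (j/2) (m+1) := by omega
        rw [e2, e1]
        push_cast
        ring
      · rw [if_neg (fun hh : Even j ∧ j ≤ 2*m => absurd hh.2 (by omega))]
        have e2 : min ((j+1+1)/2) (m+1) = min ((j+1)/2) (m+1) := by omega
        have e1 : min ((j+1)/2) (m+1) = min (j/2) (m+1) := by omega
        rw [e2, e1]
        ring
    · have hp2 : j % 2 = 1 := Nat.odd_iff.mp hpar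
      have hne : ¬ Even j := by simp [Nat.even_iff, hp2]
      rw [if_neg (fun hh : Even j ∧ j ≤ 2*m => hne hh.1)]
      rcases lt_or_ge j (2*(m+1)) with hlt | hge
      · rw [if_pos ⟨hpar, hlt⟩]
        have e2 : min ((j+1+1)/2) (m+1) = min ((j+1)/2) (m+1) := by omega
        have e1 : min ((j+1)/2) (m+1) = min (j/2) (m+1) + 1 := by omega
        rw [e2, e1]
        push_cast
        ring
      · rw [if_neg (fun hh : Odd j ∧ j < 2*(m+1) => absurd hh.2 (by omega))]
        have e2 : min ((j+1+1)/2) (m+1) = min ((j+1)/2) (m+1) := by omega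
        have e1 : min ((j+1)/2) (m+1) = min (j/2) (m+1) := by omega
        rw [e2, e1]
        ring

lemma mix_fv_eq : ∀ j, j < 2*(m+1) → fv (2*((m:ℝ)+1)) Y j = 1 - β := by
  intro j hj
  have hNne : ((m:ℝ)+1) ≠ 0 := by positivity
  unfold fv
  rw [mix_F hY j, hY j]
  unfold UO UE
  rcases Nat.even_or_odd j with hpar | hpar
  · have hno : ¬ Odd j := by simp [Nat.odd_iff, Nat.even_iff.mp hpar]
    obtain ⟨k, rfl⟩ : ∃ k, j = 2*k := ⟨j/2, by have := Nat.even_iff.mp hpar; omega⟩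
    rw [if_neg (fun hh => hno hh.1), if_pos ⟨hpar, by omega⟩]
    have e1 : min ((2*k)/2) (m+1) = k := by omega
    have e2 : min ((2*k+1)/2) (m+1) = k := by omega
    rw [e1, e2]
    push_cast
    field_simp
    ring
  · have hne : ¬ Even j := by simp [Nat.even_iff, Nat.odd_iff.mp hpar]
    obtain ⟨k, rfl⟩ : ∃ k, j = 2*k+1 := ⟨j/2, by have := Nat.odd_iff.mp hpar; omega⟩
    rw [if_pos ⟨hpar, hj⟩, if_neg (fun hh : Even (2*k+1) ∧ 2*k+1 ≤ 2*m => hne hh.1)]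
    have e1 : min ((2*k+1)/2) (m+1) = k := by omega
    have e2 : min ((2*k+1+1)/2) (m+1) = k+1 := by omega
    rw [e1, e2]
    push_cast
    field_simp
    ring

include hβ1

lemma mix_fv_le : ∀ j, fv (2*((m:ℝ)+1)) Y j ≤ 1 - β := by
  intro j
  rcases lt_or_ge j (2*(m+1)) with hlt | hge
  · rw [mix_fv_eq hY j hlt]
  · have hNne : ((m:ℝ)+1) ≠ 0 := by positivity
    unfold fv
    rw [mix_F hY j, mix_p_zero hY j hge]
    have e1 : min (j/2) (m+1) = m+1 := by omega
    have e2 : min ((j+1)/2) (m+1) = m+1 := by omega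
    rw [e1, e2]
    have hjge : (2*(m+1) : ℝ) ≤ (j:ℝ) := by exact_mod_cast hge
    have hF1 : β * ((m+1 : ℕ):ℝ) * ((m:ℝ)+1)⁻¹ + (1-β) * ((m+1 : ℕ):ℝ) * ((m:ℝ)+1)⁻¹ = 1 := by
      push_cast
      field_simp
      ring
    rw [hF1]
    push_cast at hjge ⊢
    linarith

lemma mix_payoff_le (ξ : Strategy) : payoff (2*((m:ℝ)+1)) ξ Y ≤ 1 - β := by
  rw [payoff_eq]
  calc ∑' j, ξ.p j * fv (2*((m:ℝ)+1)) Y j ≤ ∑' j, ξ.p j * (1-β) := by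
        apply Summable.tsum_le_tsum (fun j => ?_) (summable_mul_fv _ ξ Y) ((summable_p ξ).mul_right _)
        exact mul_le_mul_of_nonneg_left (mix_fv_le hβ1 hY j) (ξ.nonneg j)
    _ = 1 - β := by rw [tsum_mul_right, tsum_p ξ, one_mul]

omit hβ1 in
lemma mix_payoff_val (ξ : Strategy) (hξ : ∀ j, 2*(m+1) ≤ j → ξ.p j = 0) :
    payoff (2*((m:ℝ)+1)) ξ Y = 1 - β := by
  rw [payoff_eq]
  have hpt : ∀ j, ξ.p j * fv (2*((m:ℝ)+1)) Y j = ξ.p j * (1-β) := by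
    intro j
    rcases lt_or_ge j (2*(m+1)) with hlt | hge
    · rw [mix_fv_eq hY j hlt]
    · rw [hξ j hge, zero_mul, zero_mul]
  rw [tsum_congr hpt, tsum_mul_right, tsum_p ξ, one_mul]

end Mix

lemma tsum_zero_pointwise {f : ℕ → ℝ} (hs : Summable f) (hnn : ∀ j, 0 ≤ f j)
    (h : ∑' j, f j = 0) : ∀ j, f j = 0 := by
  intro j
  have h1 : f j ≤ ∑' i, f i := Summable.le_tsum hs j (fun k _ => hnn k)
  have h2 := hnn j
  linarith [h1]

lemma sum_extract {s : Finset ℕ} {u f : ℕ → ℝ} {P : ℝ}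
    (hu : ∀ j, 0 ≤ u j) (hf : ∀ j, f j ≤ P) (husum : ∑ j ∈ s, u j = 1)
    (heq : ∑ j ∈ s, u j * f j = P) :
    ∀ j ∈ s, 0 < u j → f j = P := by
  have key : ∑ j ∈ s, u j * (P - f j) = 0 := by
    have hc : ∀ j ∈ s, u j * (P - f j) = u j * P - u j * f j := fun j _ => by ring
    rw [Finset.sum_congr rfl hc, Finset.sum_sub_distrib, ← Finset.sum_mul, husum, heq,
      one_mul, sub_self]
  intro j hj hupos
  have hterm := (Finset.sum_eq_zero_iff_of_nonneg
    (fun i _ => mul_nonneg (hu i) (by linarith [hf i]))).mp key j hj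
  rcases mul_eq_zero.mp hterm with h | h
  · exact absurd h (ne_of_gt hupos)
  · linarith

lemma side_form (m : ℕ) (Y : Strategy) (P : ℝ)
    (hz : ∀ j, 2*(m+1) ≤ j → Y.p j = 0)
    (hfv_eq : ∀ j, j < 2*(m+1) → fv (2*((m:ℝ)+1)) Y j = P) :
    0 ≤ ((m:ℝ)+1) * Y.p 1 ∧ ((m:ℝ)+1) * Y.p 1 ≤ 1 ∧
    (∀ n, Y.p n = (((m:ℝ)+1) * Y.p 1) * UO (m+1) n
      + (1 - ((m:ℝ)+1) * Y.p 1) * UE m n) := by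
  have hNpos : (0:ℝ) < (m:ℝ)+1 := by positivity
  have hpair : ∀ j, j + 1 < 2*(m+1) → Y.p j + Y.p (j+1) = ((m:ℝ)+1)⁻¹ := by
    intro j hj
    have e1 := hfv_eq j (by omega)
    have e2 := hfv_eq (j+1) hj
    unfold fv at e1 e2
    rw [F_succ] at e2
    push_cast at e2
    have hkey : ((m:ℝ)+1) * (Y.p j + Y.p (j+1)) = 1 := by linarith
    rw [inv_eq_one_div, eq_div_iff (ne_of_gt hNpos)]
    linear_combination hkey
  have hpair0 := hpair 0 (by omega)
  have halt : ∀ j, j + 2 < 2*(m+1) → Y.p (j+2) = Y.p j := by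
    intro j hj
    have p1 := hpair j (by omega)
    have p2 := hpair (j+1) (by omega)
    have hee : j+1+1 = j+2 := rfl
    rw [hee] at p2
    linarith
  have heven : ∀ k, 2*k < 2*(m+1) → Y.p (2*k) = Y.p 0 := by
    intro k
    induction k with
    | zero => intro _; norm_num
    | succ k ih =>
      intro hk
      have h2 := halt (2*k) (by omega)
      rw [show 2*(k+1) = 2*k+2 by ring, h2]
      exact ih (by omega)
  have hodd : ∀ k, 2*k+1 < 2*(m+1) → Y.p (2*k+1) = Y.p 1 := by
    intro k
    induction k with
    | zero => intro _; norm_num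
    | succ k ih =>
      intro hk
      have h2 := halt (2*k+1) (by omega)
      rw [show 2*(k+1)+1 = 2*k+1+2 by ring, h2]
      exact ih (by omega)
  refine ⟨mul_nonneg (le_of_lt hNpos) (Y.nonneg 1), ?_, ?_⟩
  · have hle : Y.p 1 ≤ ((m:ℝ)+1)⁻¹ := by linarith [Y.nonneg 0]
    calc ((m:ℝ)+1) * Y.p 1 ≤ ((m:ℝ)+1) * ((m:ℝ)+1)⁻¹ :=
          mul_le_mul_of_nonneg_left hle (le_of_lt hNpos)
      _ = 1 := by field_simp
  · intro n
    unfold UO UE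
    rcases lt_or_ge n (2*(m+1)) with hn | hn
    · rcases Nat.even_or_odd n with hpar | hpar
      · have hno : ¬ Odd n := by simp [Nat.odd_iff, Nat.even_iff.mp hpar]
        rw [if_neg (fun hh : Odd n ∧ n < 2*(m+1) => hno hh.1),
          if_pos ⟨hpar, by have := Nat.even_iff.mp hpar; omega⟩]
        obtain ⟨k, rfl⟩ : ∃ k, n = 2*k := ⟨n/2, by have := Nat.even_iff.mp hpar; omega⟩
        rw [heven k hn]
        have hp0 : Y.p 0 = ((m:ℝ)+1)⁻¹ - Y.p 1 := by linarith
        rw [hp0]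
        field_simp
        ring
      · have hne : ¬ Even n := by simp [Nat.even_iff, Nat.odd_iff.mp hpar]
        rw [if_pos ⟨hpar, hn⟩, if_neg (fun hh : Even n ∧ n ≤ 2*m => hne hh.1)]
        obtain ⟨k, rfl⟩ : ∃ k, n = 2*k+1 := ⟨n/2, by have := Nat.odd_iff.mp hpar; omega⟩
        rw [hodd k hn]
        push_cast
        field_simp
        ring
    · rw [hz n hn, if_neg (fun hh : Odd n ∧ n < 2*(m+1) => absurd hh.2 (by omega)),
        if_neg (fun hh : Even n ∧ n ≤ 2*m => absurd hh.2 (by omega))]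
      ring

lemma forward (m : ℕ) (X Y : Strategy)
    (h1 : ∀ X' : Strategy, payoff (2*((m:ℝ)+1)) X' Y ≤ payoff (2*((m:ℝ)+1)) X Y)
    (h2 : ∀ Y' : Strategy, payoff (2*((m:ℝ)+1)) Y' X ≤ payoff (2*((m:ℝ)+1)) Y X) :
    ∃ α β : ℝ, 0 ≤ α ∧ α ≤ 1 ∧ 0 ≤ β ∧ β ≤ 1 ∧
      (∀ n, X.p n = α * UO (m + 1) n + (1 - α) * UE m n) ∧
      (∀ n, Y.p n = β * UO (m + 1) n + (1 - β) * UE m n) ∧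
      payoff (2*((m:ℝ)+1)) X Y = 1 - β ∧ payoff (2*((m:ℝ)+1)) Y X = 1 - α := by
  have hNpos : (0:ℝ) < (m:ℝ)+1 := by positivity
  have hsum := payoff_add_payoff (2*((m:ℝ)+1)) X Y
  have hUEY := payoff_UES_val m Y
  have hUEX := payoff_UES_val m X
  rw [trunc_decomp Y (2*m+1)] at hUEY
  rw [trunc_decomp X (2*m+1)] at hUEX
  push_cast at hUEY hUEX
  have hTYnn : 0 ≤ ∑' j, Y.p j * Dc (2*m+1) j :=
    tsum_nonneg fun j => mul_nonneg (Y.nonneg j) (Dc_nonneg _ _)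
  have hTXnn : 0 ≤ ∑' j, X.p j * Dc (2*m+1) j :=
    tsum_nonneg fun j => mul_nonneg (X.nonneg j) (Dc_nonneg _ _)
  have hbE1 := h1 (UES m)
  have hbE2 := h2 (UES m)
  have hTY : ∑' j, Y.p j * Dc (2*m+1) j = 0 := by linarith
  have hTX : ∑' j, X.p j * Dc (2*m+1) j = 0 := by linarith
  have hYz : ∀ j, 2*(m+1) ≤ j → Y.p j = 0 := by
    intro j hj
    have h0 := tsum_zero_pointwise (summable_Dc Y (2*m+1))
      (fun i => mul_nonneg (Y.nonneg i) (Dc_nonneg _ _)) hTY j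
    have hd := Dc_pos (show 2*m+1 < j by omega)
    rcases mul_eq_zero.mp h0 with h | h
    · exact h
    · linarith
  have hXz : ∀ j, 2*(m+1) ≤ j → X.p j = 0 := by
    intro j hj
    have h0 := tsum_zero_pointwise (summable_Dc X (2*m+1))
      (fun i => mul_nonneg (X.nonneg i) (Dc_nonneg _ _)) hTX j
    have hd := Dc_pos (show 2*m+1 < j by omega)
    rcases mul_eq_zero.mp h0 with h | h
    · exact h
    · linarith
  have hTOY : ∑' j, Y.p j * Dc (2*(m+1)) j = 0 := by
    have hzz : ∀ j:ℕ, Y.p j * Dc (2*(m+1)) j = 0 := by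
      intro j
      rcases le_or_gt j (2*(m+1)) with h | h
      · rw [Dc_eq_zero h, mul_zero]
      · rw [hYz j (by omega), zero_mul]
    exact (tsum_congr hzz).trans tsum_zero
  have hTOX : ∑' j, X.p j * Dc (2*(m+1)) j = 0 := by
    have hzz : ∀ j:ℕ, X.p j * Dc (2*(m+1)) j = 0 := by
      intro j
      rcases le_or_gt j (2*(m+1)) with h | h
      · rw [Dc_eq_zero h, mul_zero]
      · rw [hXz j (by omega), zero_mul]
    exact (tsum_congr hzz).trans tsum_zero
  have hUOY := payoff_UOS_val m Y
  have hUOX := payoff_UOS_val m X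
  rw [trunc_decomp Y (2*(m+1)), hTOY] at hUOY
  rw [trunc_decomp X (2*(m+1)), hTOX] at hUOX
  push_cast at hUOY hUOX
  have hbO1 := h1 (UOS (m+1) (Nat.succ_pos m))
  have hbO2 := h2 (UOS (m+1) (Nat.succ_pos m))
  have hP1 : payoff (2*((m:ℝ)+1)) X Y = (m:ℝ) + 1 - Y.exp := by linarith
  have hP2 : payoff (2*((m:ℝ)+1)) Y X = (m:ℝ) + 1 - X.exp := by linarith
  have hfvY_le : ∀ j, fv (2*((m:ℝ)+1)) Y j ≤ payoff (2*((m:ℝ)+1)) X Y :=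
    fun j => payoff_deltaS (2*((m:ℝ)+1)) j Y ▸ h1 (deltaS j)
  have hfvX_le : ∀ j, fv (2*((m:ℝ)+1)) X j ≤ payoff (2*((m:ℝ)+1)) Y X :=
    fun j => payoff_deltaS (2*((m:ℝ)+1)) j X ▸ h2 (deltaS j)
  have hfinE_Y : ∑ j ∈ Finset.range (2*(m+1)), UE m j * fv (2*((m:ℝ)+1)) Y j
      = payoff (2*((m:ℝ)+1)) X Y := by
    rw [← payoff_UES_fin]; linarith
  have hfinO_Y : ∑ j ∈ Finset.range (2*(m+1)), UO (m+1) j * fv (2*((m:ℝ)+1)) Y j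
      = payoff (2*((m:ℝ)+1)) X Y := by
    rw [← payoff_UOS_fin]; linarith
  have hfinE_X : ∑ j ∈ Finset.range (2*(m+1)), UE m j * fv (2*((m:ℝ)+1)) X j
      = payoff (2*((m:ℝ)+1)) Y X := by
    rw [← payoff_UES_fin]; linarith
  have hfinO_X : ∑ j ∈ Finset.range (2*(m+1)), UO (m+1) j * fv (2*((m:ℝ)+1)) X j
      = payoff (2*((m:ℝ)+1)) Y X := by
    rw [← payoff_UOS_fin]; linarith
  have hfvY_eq : ∀ j, j < 2*(m+1) → fv (2*((m:ℝ)+1)) Y j = payoff (2*((m:ℝ)+1)) X Y := by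
    intro j hj
    rcases Nat.even_or_odd j with hpar | hpar
    · refine sum_extract (UE_nonneg m) hfvY_le (UE_sum m) hfinE_Y j (Finset.mem_range.mpr hj) ?_
      unfold UE
      rw [if_pos ⟨hpar, by have := Nat.even_iff.mp hpar; omega⟩]
      positivity
    · refine sum_extract (UO_nonneg (m+1)) hfvY_le (UO_sum (m+1) (Nat.succ_pos m)) hfinO_Y j
        (Finset.mem_range.mpr hj) ?_
      unfold UO
      rw [if_pos ⟨hpar, hj⟩]
      positivity
  have hfvX_eq : ∀ j, j < 2*(m+1) → fv (2*((m:ℝ)+1)) X j = payoff (2*((m:ℝ)+1)) Y X := by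
    intro j hj
    rcases Nat.even_or_odd j with hpar | hpar
    · refine sum_extract (UE_nonneg m) hfvX_le (UE_sum m) hfinE_X j (Finset.mem_range.mpr hj) ?_
      unfold UE
      rw [if_pos ⟨hpar, by have := Nat.even_iff.mp hpar; omega⟩]
      positivity
    · refine sum_extract (UO_nonneg (m+1)) hfvX_le (UO_sum (m+1) (Nat.succ_pos m)) hfinO_X j
        (Finset.mem_range.mpr hj) ?_
      unfold UO
      rw [if_pos ⟨hpar, hj⟩]
      positivity
  obtain ⟨hb0Y, hb1Y, hformY⟩ := side_form m Y (payoff (2*((m:ℝ)+1)) X Y) hYz hfvY_eq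
  obtain ⟨hb0X, hb1X, hformX⟩ := side_form m X (payoff (2*((m:ℝ)+1)) Y X) hXz hfvX_eq
  exact ⟨((m:ℝ)+1) * X.p 1, ((m:ℝ)+1) * Y.p 1, hb0X, hb1X, hb0Y, hb1Y, hformX, hformY,
    mix_payoff_val hformY X hXz, mix_payoff_val hformX Y hYz⟩

end APA

/-- characterization of equilibria when `v1 = v2 > 0` and
`v2/2` is a positive integer (so `v2 = 2(m+1)` with `m = v2/2 − 1`). -/
theorem allpay_equilibria_equal_even (v1 v2 : ℝ) (hv2 : 0 < v2) (hv : v1 = v2)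
    (m : ℕ) (hm : v2 = 2 * ((m : ℝ) + 1)) (X Y : Strategy) :
    IsNashAPA v1 v2 X Y ↔
      ∃ α β : ℝ, 0 ≤ α ∧ α ≤ 1 ∧ 0 ≤ β ∧ β ≤ 1 ∧
        (∀ n, X.p n = α * UO (m + 1) n + (1 - α) * UE m n) ∧
        (∀ n, Y.p n = β * UO (m + 1) n + (1 - β) * UE m n) ∧
        payoff v1 X Y = 1 - β ∧ payoff v2 Y X = 1 - α := by
  have hv1 : v1 = 2 * ((m:ℝ) + 1) := by rw [hv, hm]
  constructor
  · rintro ⟨h1, h2⟩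
    rw [hv1] at h1
    rw [hm] at h2
    obtain ⟨α, β, h3, h4, h5, h6, h7, h8, h9, h10⟩ := APA.forward m X Y h1 h2
    exact ⟨α, β, h3, h4, h5, h6, h7, h8, by rw [hv1]; exact h9, by rw [hm]; exact h10⟩
  · rintro ⟨α, β, hα0, hα1, hβ0, hβ1, hX, hY, hPXY, hPYX⟩
    constructor
    · intro X'
      rw [hPXY, hv1]
      exact APA.mix_payoff_le hβ1 hY X'
    · intro Y'
      rw [hPYX, hm]
      exact APA.mix_payoff_le hα1 hX Y'
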